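/- Let ℒ be a (p,n,L_1)-multi-labelling of an L-graph (L ≥ 2), with p-vertex tuple sizes d_1,…,d_L (each satisfying ℓ ≤ d_s ≤ L_1), r(ℒ) distinct n-labels and c(ℒ) distinct p-labels. Then the excess Δ(ℒ) := 1 + L/2 + (∑_{s=1}^L d_s)/(2ℓ) − r(ℒ) − c(ℒ)/ℓ is nonnegative. -/

import Mathlib

set_option linter.unusedSectionVars false

namespace ExcessAux

variable {α β : Type*} [DecidableEq α] [DecidableEq β]

def ringAux (f : α × Finset β) : List (α × Finset β) → List ((α × Finset β) × (α × Finset β))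
  | [] => []
  | [x] => [(x, f)]
  | x :: y :: t => (x, y) :: ringAux f (y :: t)

def ringL : List (α × Finset β) → List ((α × Finset β) × (α × Finset β))
  | [] => []
  | x :: t => ringAux x (x :: t)

def wt (i : α) (j : β) (p : (α × Finset β) × (α × Finset β)) : ℕ :=
  (if j ∈ p.1.2 then 1 else 0) * ((if p.1.1 = i then 1 else 0) + (if p.2.1 = i then 1 else 0))

def cnt (i : α) (j : β) (l : List (α × Finset β)) : ℕ := ((ringL l).map (wt i j)).sum

def adjOK (l : List (α × Finset β)) : Prop := ∀ p ∈ ringL l, p.1.1 ≠ p.2.1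

def valid (l : List (α × Finset β)) : Prop := adjOK l ∧ ∀ i j, cnt i j l ≠ 1

def unionAll (l : List (α × Finset β)) : Finset β := l.foldr (fun e s => e.2 ∪ s) ∅

def sdm (g : ℕ) (l : List (α × Finset β)) : ℕ := (l.map fun e => max e.2.card g).sum

@[simp] lemma ringAux_nil (f : α × Finset β) : ringAux f [] = [] := rfl
@[simp] lemma ringAux_single (f x : α × Finset β) : ringAux f [x] = [(x, f)] := rfl
@[simp] lemma ringAux_cons₂ (f x y : α × Finset β) (t : List (α × Finset β)) :
    ringAux f (x :: y :: t) = (x, y) :: ringAux f (y :: t) := rfl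
@[simp] lemma ringL_nil : ringL ([] : List (α × Finset β)) = [] := rfl
@[simp] lemma ringL_cons (x : α × Finset β) (t : List (α × Finset β)) :
    ringL (x :: t) = ringAux x (x :: t) := rfl

lemma ringAux_mem (f : α × Finset β) :
    ∀ (xs : List (α × Finset β)) (p : (α × Finset β) × (α × Finset β)), p ∈ ringAux f xs →
      p.1 ∈ xs ∧ (p.2 ∈ xs ∨ p.2 = f)
  | [], p => by simp [ringAux]
  | [x], p => by
      simp only [ringAux_single, List.mem_singleton]
      rintro rfl; simp
  | x :: y :: t, p => by
      simp only [ringAux_cons₂, List.mem_cons]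
      rintro (rfl | hp)
      · simp
      · obtain ⟨h1, h2⟩ := ringAux_mem f (y :: t) p hp
        simp only [List.mem_cons] at h1 h2
        constructor
        · tauto
        · tauto

lemma ringAux_append_singleton (f y : α × Finset β) :
    ∀ (xs : List (α × Finset β)), xs ≠ [] →
      ringAux f (xs ++ [y]) = ringAux y xs ++ [(y, f)]
  | [], h => absurd rfl h
  | [x], _ => by simp [ringAux]
  | x :: x' :: t, _ => by
      have := ringAux_append_singleton f y (x' :: t) (by simp)
      simp only [List.cons_append] at this ⊢
      rw [ringAux_cons₂, this, ringAux_cons₂, List.cons_append]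

lemma ringL_rotate_one (l : List (α × Finset β)) : (ringL (l.rotate 1)).Perm (ringL l) := by
  match l with
  | [] => simp
  | [a] => simp [List.rotate_singleton]
  | a :: b :: t =>
      have h1 : (a :: b :: t).rotate 1 = (b :: t) ++ [a] := by
        rw [List.rotate_cons_succ, List.rotate_zero]
      rw [h1]
      have hne : (b :: t) ≠ [] := by simp
      have h2 : ringL ((b :: t) ++ [a]) = ringAux a (b :: t) ++ [(a, b)] := by
        show ringAux b ((b :: t) ++ [a]) = _
        rw [ringAux_append_singleton b a (b :: t) hne]
      rw [h2]
      show (ringAux a (b :: t) ++ [(a, b)]).Perm ((a, b) :: ringAux a (b :: t))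
      exact List.perm_append_singleton _ _

lemma ringL_rotate (l : List (α × Finset β)) (n : ℕ) : (ringL (l.rotate n)).Perm (ringL l) := by
  induction n with
  | zero => simp
  | succ n ih =>
      have h : l.rotate (n + 1) = (l.rotate n).rotate 1 := by rw [List.rotate_rotate]
      rw [h]
      exact (ringL_rotate_one (l.rotate n)).trans ih

lemma cnt_rotate (i : α) (j : β) (l : List (α × Finset β)) (n : ℕ) :
    cnt i j (l.rotate n) = cnt i j l :=
  ((ringL_rotate l n).map (wt i j)).sum_eq

lemma adjOK_rotate {l : List (α × Finset β)} (h : adjOK l) (n : ℕ) : adjOK (l.rotate n) :=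
  fun p hp => h p ((ringL_rotate l n).mem_iff.mp hp)

lemma valid_rotate {l : List (α × Finset β)} (h : valid l) (n : ℕ) : valid (l.rotate n) :=
  ⟨adjOK_rotate h.1 n, fun i j => by rw [cnt_rotate]; exact h.2 i j⟩

lemma mem_unionAll (j : β) : ∀ (l : List (α × Finset β)),
    j ∈ unionAll l ↔ ∃ e ∈ l, j ∈ e.2
  | [] => by simp [unionAll]
  | e :: t => by
      have ht := mem_unionAll j t
      show j ∈ e.2 ∪ unionAll t ↔ _
      rw [Finset.mem_union, ht]
      constructor
      · rintro (h | ⟨e', he', hj⟩)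
        · exact ⟨e, List.mem_cons_self, h⟩
        · exact ⟨e', List.mem_cons_of_mem _ he', hj⟩
      · rintro ⟨e', he', hj⟩
        rcases List.mem_cons.mp he' with rfl | he'
        · exact Or.inl hj
        · exact Or.inr ⟨e', he', hj⟩

lemma unionAll_rotate (l : List (α × Finset β)) (n : ℕ) :
    unionAll (l.rotate n) = unionAll l := by
  ext j
  simp only [mem_unionAll]
  constructor
  · rintro ⟨e, he, hj⟩; exact ⟨e, (List.rotate_perm l n).mem_iff.mp he, hj⟩
  · rintro ⟨e, he, hj⟩; exact ⟨e, (List.rotate_perm l n).mem_iff.mpr he, hj⟩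

lemma sdm_rotate (g : ℕ) (l : List (α × Finset β)) (n : ℕ) :
    sdm g (l.rotate n) = sdm g l := by
  unfold sdm
  rw [List.map_rotate]
  exact ((List.rotate_perm _ n).sum_eq)

lemma rr_rotate (l : List (α × Finset β)) (n : ℕ) :
    ((l.rotate n).map Prod.fst).toFinset = (l.map Prod.fst).toFinset := by
  apply List.toFinset_eq_of_perm
  exact ((List.rotate_perm l n).map Prod.fst)

lemma count_fst_rotate (l : List (α × Finset β)) (n : ℕ) (a : α) :
    ((l.rotate n).map Prod.fst).count a = (l.map Prod.fst).count a :=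
  (((List.rotate_perm l n).map Prod.fst)).count_eq a

@[simp] lemma wt_mk (i : α) (j : β) (p q : α × Finset β) :
    wt i j (p, q) = (if j ∈ p.2 then 1 else 0) *
      ((if p.1 = i then 1 else 0) + (if q.1 = i then 1 else 0)) := rfl

/-- sums of `wt` over `ringAux` depend on the closing entry only through its label -/
lemma ringAux_sum_congr (i : α) (j : β) (f f' : α × Finset β) (h : f.1 = f'.1) :
    ∀ (xs : List (α × Finset β)),
      ((ringAux f' xs).map (wt i j)).sum = ((ringAux f xs).map (wt i j)).sum
  | [] => rfl
  | [x] => by simp [ringAux, wt, h]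
  | x :: y :: t => by
      simp only [ringAux, List.map_cons, List.sum_cons]
      rw [ringAux_sum_congr i j f f' h (y :: t)]

lemma ringAux_adj_congr (f f' : α × Finset β) (h : f.1 = f'.1) :
    ∀ (xs : List (α × Finset β)), (∀ p ∈ ringAux f xs, p.1.1 ≠ p.2.1) →
      (∀ p ∈ ringAux f' xs, p.1.1 ≠ p.2.1)
  | [] => by simp [ringAux]
  | [x] => by
      intro hp p hmem
      simp only [ringAux, List.mem_singleton] at hmem hp
      subst hmem
      have := hp (x, f) rfl
      simpa [← h] using this
  | x :: y :: t => by
      intro hp p hmem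
      simp only [ringAux, List.mem_cons] at hmem hp ⊢
      rcases hmem with rfl | hmem
      · exact hp (x, y) (Or.inl rfl)
      · exact ringAux_adj_congr f f' h (y :: t) (fun q hq => hp q (Or.inr hq)) p hmem

lemma ringAux_map (F : α × Finset β → α × Finset β) (f : α × Finset β) :
    ∀ (xs : List (α × Finset β)),
      ringAux (F f) (xs.map F) = (ringAux f xs).map (Prod.map F F)
  | [] => rfl
  | [x] => rfl
  | x :: y :: t => by
      simp only [List.map_cons, ringAux]
      rw [← List.map_cons (f := F) (a := y) (l := t)]
      rw [ringAux_map F f (y :: t)]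
      rfl

/-- if the label `i` does not occur in `xs` nor as the closing label then all weights vanish -/
lemma ringAux_sum_zero (i : α) (j : β) (f : α × Finset β) (xs : List (α × Finset β))
    (hf : f.1 ≠ i) (hxs : ∀ e ∈ xs, e.1 ≠ i) :
    ((ringAux f xs).map (wt i j)).sum = 0 := by
  apply List.sum_eq_zero
  intro n hn
  simp only [List.mem_map] at hn
  obtain ⟨p, hp, rfl⟩ := hn
  obtain ⟨h1, h2⟩ := ringAux_mem f xs p hp
  have e1 : (if p.1.1 = i then (1:ℕ) else 0) = 0 := by
    simp [hxs p.1 h1]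
  have e2 : (if p.2.1 = i then (1:ℕ) else 0) = 0 := by
    rcases h2 with h2 | h2
    · simp [hxs p.2 h2]
    · subst h2; simp [hf]
  unfold wt
  rw [e1, e2]
  simp



section Part3
variable {α β : Type*} [DecidableEq α] [DecidableEq β]

lemma unique_facts (e₀ e₁ : α × Finset β) (rest : List (α × Finset β))
    (hc : ((e₀ :: e₁ :: rest).map Prod.fst).count e₁.1 = 1) :
    e₀.1 ≠ e₁.1 ∧ ∀ e ∈ rest, e.1 ≠ e₁.1 := by
  have h1 : (rest.map Prod.fst).count e₁.1 = 0 ∧ e₀.1 ≠ e₁.1 := by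
    by_cases h : e₀.1 = e₁.1 <;>
      simp [List.count_cons, h] at hc ⊢ <;> omega
  refine ⟨h1.2, fun e he hee => ?_⟩
  have : e₁.1 ∈ rest.map Prod.fst := List.mem_map.mpr ⟨e, he, hee⟩
  rw [← List.count_pos_iff] at this
  omega

lemma cnt_of_unique (e₀ e₁ : α × Finset β) (rest : List (α × Finset β))
    (hc : ((e₀ :: e₁ :: rest).map Prod.fst).count e₁.1 = 1) (j : β) :
    cnt e₁.1 j (e₀ :: e₁ :: rest) =
      (if j ∈ e₀.2 then 1 else 0) + (if j ∈ e₁.2 then 1 else 0) := by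
  obtain ⟨h01, hr⟩ := unique_facts e₀ e₁ rest hc
  match rest with
  | [] =>
      by_cases hj0 : j ∈ e₀.2 <;> by_cases hj1 : j ∈ e₁.2 <;>
        simp [cnt, ringL, ringAux, wt, h01, hj0, hj1]
  | r₀ :: rest' =>
      have hz : ((ringAux e₀ (r₀ :: rest')).map (wt e₁.1 j)).sum = 0 :=
        ringAux_sum_zero _ _ _ _ h01 (fun e he => hr e he)
      have hr0 : r₀.1 ≠ e₁.1 := hr r₀ List.mem_cons_self
      by_cases hj0 : j ∈ e₀.2 <;> by_cases hj1 : j ∈ e₁.2 <;>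
        simp [cnt, ringL, ringAux, wt, h01, hr0, hj0, hj1, hz, List.sum_cons]

lemma tuple_eq_of_unique (e₀ e₁ : α × Finset β) (rest : List (α × Finset β))
    (hval : valid (e₀ :: e₁ :: rest))
    (hc : ((e₀ :: e₁ :: rest).map Prod.fst).count e₁.1 = 1) : e₀.2 = e₁.2 := by
  ext j
  have h := hval.2 e₁.1 j
  rw [cnt_of_unique e₀ e₁ rest hc j] at h
  by_cases hj0 : j ∈ e₀.2 <;> by_cases hj1 : j ∈ e₁.2 <;>
    simp [hj0, hj1] at h ⊢

/-- number of tuples containing `j` -/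
def occ (j : β) (l : List (α × Finset β)) : ℕ := l.countP (fun e => decide (j ∈ e.2))

lemma occ_rotate (j : β) (l : List (α × Finset β)) (n : ℕ) :
    occ j (l.rotate n) = occ j l := (List.rotate_perm l n).countP_eq _

lemma two_le_occ {l : List (α × Finset β)} (hval : valid l) (h2 : 2 ≤ l.length)
    {j : β} (hj : j ∈ unionAll l) : 2 ≤ occ j l := by
  by_contra hcon
  push_neg at hcon
  obtain ⟨e, he, hje⟩ := (mem_unionAll j l).mp hj
  have hp1 : 0 < occ j l := by
    rw [occ, List.countP_pos_iff]
    exact ⟨e, he, by simpa using hje⟩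
  have hocc : occ j l = 1 := by omega
  obtain ⟨s, hs, hget⟩ := List.mem_iff_getElem.mp he
  have hval' := valid_rotate hval s
  have hlen' : (l.rotate s).length = l.length := List.length_rotate l s
  have hocc' : occ j (l.rotate s) = 1 := by rw [occ_rotate]; exact hocc
  have hget0 : (l.rotate s)[0]? = some e := by
    rw [List.getElem?_eq_getElem (by omega), List.getElem_rotate]
    simp [Nat.mod_eq_of_lt hs, hget]
  rcases hl' : l.rotate s with _ | ⟨e', t⟩
  · rw [hl'] at hlen'; simp at hlen'; omega
  rw [hl'] at hval' hocc' hget0 hlen'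
  simp only [List.getElem?_cons_zero, Option.some.injEq] at hget0
  subst hget0
  rcases ht : t with _ | ⟨t₀, t'⟩
  · rw [ht] at hlen'; simp at hlen'; omega
  rw [ht] at hval' hocc' hlen'
  -- occ of cons
  have h0 : occ j (t₀ :: t') = 0 := by
    have hc : occ j (e' :: t₀ :: t') = occ j (t₀ :: t') + 1 := by
      rw [occ, occ, List.countP_cons]
      simp [hje]
    omega
  have htz : ∀ a ∈ t₀ :: t', j ∉ a.2 := by
    rw [occ, List.countP_eq_zero] at h0
    intro a ha hmem
    exact absurd (by simpa using hmem) (by simpa using h0 a ha)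
  -- compute cnt e'.1 j
  have hadj : t₀.1 ≠ e'.1 := by
    have := hval'.1 (e', t₀) (by simp [ringL, ringAux])
    exact fun h => this h.symm
  have hz : ((ringAux e' (t₀ :: t')).map (wt e'.1 j)).sum = 0 := by
    apply List.sum_eq_zero
    intro n hn
    simp only [List.mem_map] at hn
    obtain ⟨p, hp, rfl⟩ := hn
    obtain ⟨h1, _⟩ := ringAux_mem e' (t₀ :: t') p hp
    simp [wt, htz p.1 h1]
  have : cnt e'.1 j (e' :: t₀ :: t') = 1 := by
    simp [cnt, ringL, ringAux, wt, hje, hadj, hz, List.sum_cons]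
  exact hval'.2 e'.1 j this

lemma sum_occ : ∀ (l : List (α × Finset β)),
    ∑ j ∈ unionAll l, occ j l = (l.map fun e => e.2.card).sum
  | [] => by simp [unionAll, occ]
  | e :: t => by
      have IH := sum_occ t
      have hUA : unionAll (e :: t) = e.2 ∪ unionAll t := rfl
      have hocc : ∀ j, occ j (e :: t) = (if j ∈ e.2 then 1 else 0) + occ j t := by
        intro j
        rw [occ, List.countP_cons]
        by_cases hj : j ∈ e.2 <;> simp [hj, occ] <;> omega
      calc ∑ j ∈ unionAll (e :: t), occ j (e :: t)
          = ∑ j ∈ e.2 ∪ unionAll t, ((if j ∈ e.2 then 1 else 0) + occ j t) := by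
            rw [hUA]; exact Finset.sum_congr rfl (fun j _ => hocc j)
        _ = (∑ j ∈ e.2 ∪ unionAll t, if j ∈ e.2 then 1 else 0)
            + ∑ j ∈ e.2 ∪ unionAll t, occ j t := Finset.sum_add_distrib
        _ = e.2.card + (t.map fun e => e.2.card).sum := by
            congr 1
            · rw [Finset.sum_ite_mem, Finset.union_inter_cancel_left]
              simp
            · rw [← IH]
              apply (Finset.sum_subset Finset.subset_union_right ?_).symm
              intro j _ hj
              rw [occ, List.countP_eq_zero]
              intro e' he'
              simp only [decide_eq_true_eq]
              exact fun hmem => hj ((mem_unionAll j t).mpr ⟨e', he', hmem⟩)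
        _ = ((e :: t).map fun e => e.2.card).sum := by simp

lemma two_mul_card_le_length {γ : Type*} [DecidableEq γ] {l : List γ}
    (h : ∀ a ∈ l, 2 ≤ l.count a) : 2 * l.toFinset.card ≤ l.length := by
  have hsum : ∑ a ∈ l.toFinset, l.count a = l.length := by
    have := Multiset.toFinset_sum_count_eq (l : Multiset γ)
    simpa using this
  calc 2 * l.toFinset.card = ∑ _a ∈ l.toFinset, 2 := by
        rw [Finset.sum_const]; ring
    _ ≤ ∑ a ∈ l.toFinset, l.count a :=
        Finset.sum_le_sum (fun a ha => h a (List.mem_toFinset.mp ha))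
    _ = l.length := hsum

end Part3

section Op1
variable {α β : Type*} [DecidableEq α] [DecidableEq β]

lemma op1_cnt (e₀ e₁ r₀ : α × Finset β) (rest : List (α × Finset β))
    (heq : e₀.2 = e₁.2) (i : α) (j : β) :
    cnt i j (e₀ :: e₁ :: r₀ :: rest) =
      cnt i j (e₀ :: r₀ :: rest)
      + 2 * ((if j ∈ e₀.2 then 1 else 0) * (if e₁.1 = i then 1 else 0)) := by
  simp only [cnt, ringL_cons, ringAux_cons₂, List.map_cons, List.sum_cons, wt_mk]
  rw [← heq]
  ring

lemma op1_valid (e₀ e₁ r₀ : α × Finset β) (rest : List (α × Finset β))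
    (hval : valid (e₀ :: e₁ :: r₀ :: rest))
    (hc : ((e₀ :: e₁ :: r₀ :: rest).map Prod.fst).count e₁.1 = 1)
    (hne : e₀.1 ≠ r₀.1) :
    valid (e₀ :: r₀ :: rest) := by
  have heq : e₀.2 = e₁.2 := tuple_eq_of_unique e₀ e₁ (r₀ :: rest) hval hc
  constructor
  · intro p hp
    simp only [ringL_cons, ringAux_cons₂, List.mem_cons] at hp
    rcases hp with rfl | hp
    · exact hne
    · exact hval.1 p (by simp only [ringL_cons, ringAux_cons₂, List.mem_cons]; tauto)
  · intro i j
    have hrel := op1_cnt e₀ e₁ r₀ rest heq i j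
    by_cases hi : e₁.1 = i
    · subst hi
      have hu := cnt_of_unique e₀ e₁ (r₀ :: rest) hc j
      rw [← heq] at hu
      simp only [if_pos rfl, mul_one] at hrel
      by_cases hj : j ∈ e₀.2 <;> simp [hj] at hu hrel <;> omega
    · simp only [if_neg hi, mul_zero, mul_comm] at hrel
      have := hval.2 i j
      omega

lemma op1_rr (e₀ e₁ r₀ : α × Finset β) (rest : List (α × Finset β))
    (hc : ((e₀ :: e₁ :: r₀ :: rest).map Prod.fst).count e₁.1 = 1) :
    ((e₀ :: e₁ :: r₀ :: rest).map Prod.fst).toFinset.card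
      = ((e₀ :: r₀ :: rest).map Prod.fst).toFinset.card + 1 := by
  obtain ⟨h01, hr⟩ := unique_facts e₀ e₁ (r₀ :: rest) hc
  have hni : e₁.1 ∉ ((e₀ :: r₀ :: rest).map Prod.fst).toFinset := by
    simp only [List.mem_toFinset, List.mem_map, List.mem_cons, not_exists]
    rintro a ⟨(rfl | rfl | ha), haa⟩
    · exact h01 haa
    · exact hr a List.mem_cons_self haa
    · exact hr a (List.mem_cons_of_mem _ ha) haa
  have hset : ((e₀ :: e₁ :: r₀ :: rest).map Prod.fst).toFinset
      = insert e₁.1 (((e₀ :: r₀ :: rest).map Prod.fst).toFinset) := by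
    ext a
    simp only [List.mem_toFinset, List.mem_map, List.mem_cons, Finset.mem_insert]
    constructor
    · rintro ⟨b, (rfl | rfl | rfl | hb), rfl⟩
      · exact Or.inr ⟨b, by tauto⟩
      · exact Or.inl rfl
      · exact Or.inr ⟨b, by tauto⟩
      · exact Or.inr ⟨b, by tauto⟩
    · rintro (rfl | ⟨b, (rfl | rfl | hb), rfl⟩)
      · exact ⟨e₁, by tauto⟩
      · exact ⟨b, by tauto⟩
      · exact ⟨b, by tauto⟩
      · exact ⟨b, by tauto⟩
  rw [hset, Finset.card_insert_of_notMem hni]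

lemma op1_unionAll (e₀ e₁ r₀ : α × Finset β) (rest : List (α × Finset β))
    (heq : e₀.2 = e₁.2) :
    unionAll (e₀ :: e₁ :: r₀ :: rest) = unionAll (e₀ :: r₀ :: rest) := by
  ext j
  simp only [mem_unionAll, List.mem_cons]
  constructor
  · rintro ⟨e, (rfl | rfl | he), hj⟩
    · exact ⟨e, by tauto⟩
    · exact ⟨e₀, by rw [heq]; tauto⟩
    · exact ⟨e, by tauto⟩
  · rintro ⟨e, (rfl | he), hj⟩
    · exact ⟨e, by tauto⟩
    · exact ⟨e, by tauto⟩

lemma op1_sdm (g : ℕ) (e₀ e₁ r₀ : α × Finset β) (rest : List (α × Finset β)) :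
    sdm g (e₀ :: e₁ :: r₀ :: rest) = sdm g (e₀ :: r₀ :: rest) + max e₁.2.card g := by
  simp only [sdm, List.map_cons, List.sum_cons]
  ring

end Op1

section Op2
variable {α β : Type*} [DecidableEq α] [DecidableEq β]

lemma ringL_map (F : α × Finset β → α × Finset β) (l : List (α × Finset β)) :
    ringL (l.map F) = (ringL l).map (Prod.map F F) := by
  match l with
  | [] => rfl
  | a :: t => exact ringAux_map F a (a :: t)

lemma op2_cnt (e₀ e₁ r₀ r₁ : α × Finset β) (rest : List (α × Finset β))
    (heq : e₀.2 = e₁.2) (hx : e₀.1 = r₀.1) (i : α) (j : β) :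
    cnt i j (e₀ :: e₁ :: r₀ :: r₁ :: rest) =
      cnt i j ((e₀.1, r₀.2) :: r₁ :: rest)
      + 2 * ((if j ∈ e₀.2 then 1 else 0) *
          ((if e₁.1 = i then 1 else 0) + (if e₀.1 = i then 1 else 0))) := by
  have htail : ((ringAux (e₀.1, r₀.2) (r₁ :: rest)).map (wt i j)).sum
      = ((ringAux e₀ (r₁ :: rest)).map (wt i j)).sum :=
    ringAux_sum_congr i j e₀ (e₀.1, r₀.2) rfl (r₁ :: rest)
  simp only [cnt, ringL_cons, ringAux_cons₂, List.map_cons, List.sum_cons, wt_mk, htail]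
  rw [← heq, ← hx]
  ring

lemma cnt_erase (J : Finset β) (l : List (α × Finset β)) (i : α) (j : β) :
    cnt i j (l.map (fun e => (e.1, e.2 \ J))) = if j ∈ J then 0 else cnt i j l := by
  unfold cnt
  rw [ringL_map, List.map_map]
  by_cases hj : j ∈ J
  · rw [if_pos hj]
    apply List.sum_eq_zero
    intro n hn
    simp only [List.mem_map, Function.comp_apply] at hn
    obtain ⟨p, _, rfl⟩ := hn
    simp [wt, Prod.map, hj]
  · rw [if_neg hj]
    congr 1
    apply List.map_congr_left
    intro p _
    simp only [Function.comp_apply, wt, Prod.map]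
    congr 2
    simp [Finset.mem_sdiff, hj]

lemma op2_valid (e₀ e₁ r₀ r₁ : α × Finset β) (rest : List (α × Finset β))
    (hval : valid (e₀ :: e₁ :: r₀ :: r₁ :: rest))
    (hc : ((e₀ :: e₁ :: r₀ :: r₁ :: rest).map Prod.fst).count e₁.1 = 1)
    (hx : e₀.1 = r₀.1) :
    valid ((((e₀.1, r₀.2) :: r₁ :: rest)).map
      (fun e => (e.1, e.2 \ (e₀.2.filter (fun j =>
        cnt e₀.1 j (e₀ :: e₁ :: r₀ :: r₁ :: rest) = 3))))) := by
  have heq : e₀.2 = e₁.2 := tuple_eq_of_unique e₀ e₁ (r₀ :: r₁ :: rest) hval hc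
  obtain ⟨h01, hrr⟩ := unique_facts e₀ e₁ (r₀ :: r₁ :: rest) hc
  constructor
  · -- adjacency
    have hadjmid : adjOK ((e₀.1, r₀.2) :: r₁ :: rest) := by
      intro p hp
      simp only [ringL_cons, ringAux_cons₂, List.mem_cons] at hp
      rcases hp with rfl | hp
      · show e₀.1 ≠ r₁.1
        rw [hx]
        exact hval.1 (r₀, r₁) (by simp [ringL, ringAux])
      · exact ringAux_adj_congr e₀ (e₀.1, r₀.2) rfl (r₁ :: rest)
          (fun q hq => hval.1 q
            (by simp only [ringL_cons, ringAux_cons₂, List.mem_cons]; tauto))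
          p hp
    intro p hp
    rw [ringL_map] at hp
    simp only [List.mem_map] at hp
    obtain ⟨q, hq, rfl⟩ := hp
    exact hadjmid q hq
  · -- counts
    intro i j
    rw [cnt_erase]
    by_cases hj : j ∈ e₀.2.filter (fun j =>
        cnt e₀.1 j (e₀ :: e₁ :: r₀ :: r₁ :: rest) = 3)
    · simp [hj]
    · rw [if_neg hj]
      have hrel := op2_cnt e₀ e₁ r₀ r₁ rest heq hx i j
      by_cases hi1 : e₁.1 = i
      · subst hi1
        have hu := cnt_of_unique e₀ e₁ (r₀ :: r₁ :: rest) hc j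
        rw [← heq] at hu
        rw [if_pos rfl, if_neg h01] at hrel
        by_cases hjm : j ∈ e₀.2
        · rw [if_pos hjm] at hu hrel
          omega
        · rw [if_neg hjm] at hu hrel
          omega
      · by_cases hi0 : e₀.1 = i
        · subst hi0
          rw [if_neg hi1, if_pos rfl] at hrel
          by_cases hjm : j ∈ e₀.2
          · have hJ3 : cnt e₀.1 j (e₀ :: e₁ :: r₀ :: r₁ :: rest) ≠ 3 := by
              intro h3
              exact hj (Finset.mem_filter.mpr ⟨hjm, by simpa using h3⟩)
            have h1 := hval.2 e₀.1 j
            rw [if_pos hjm] at hrel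
            omega
          · rw [if_neg hjm] at hrel
            have := hval.2 e₀.1 j
            omega
        · rw [if_neg hi1, if_neg hi0] at hrel
          have := hval.2 i j
          omega

end Op2

section Op2Q
variable {α β : Type*} [DecidableEq α] [DecidableEq β]

lemma op2_rr (e₀ e₁ r₀ r₁ : α × Finset β) (rest : List (α × Finset β))
    (hc : ((e₀ :: e₁ :: r₀ :: r₁ :: rest).map Prod.fst).count e₁.1 = 1)
    (hx : e₀.1 = r₀.1) (J : Finset β) :
    ((e₀ :: e₁ :: r₀ :: r₁ :: rest).map Prod.fst).toFinset.card
      = (((((e₀.1, r₀.2) :: r₁ :: rest)).map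
          (fun e => (e.1, e.2 \ J))).map Prod.fst).toFinset.card + 1 := by
  obtain ⟨h01, hrr⟩ := unique_facts e₀ e₁ (r₀ :: r₁ :: rest) hc
  have hfst : ((((e₀.1, r₀.2) :: r₁ :: rest)).map
      (fun e => (e.1, e.2 \ J))).map Prod.fst = e₀.1 :: (r₁ :: rest).map Prod.fst := by
    simp [List.map_map, Function.comp]
  rw [hfst]
  have hni : e₁.1 ∉ (e₀.1 :: (r₁ :: rest).map Prod.fst).toFinset := by
    simp only [List.mem_toFinset, List.mem_cons, List.mem_map, not_or, not_exists]
    constructor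
    · exact fun h => h01 h.symm
    · rintro a ⟨(rfl | ha), haa⟩
      · exact hrr a (by simp) haa
      · exact hrr a (by simp [ha]) haa
  have hset : ((e₀ :: e₁ :: r₀ :: r₁ :: rest).map Prod.fst).toFinset
      = insert e₁.1 ((e₀.1 :: (r₁ :: rest).map Prod.fst).toFinset) := by
    ext a
    simp only [List.mem_toFinset, List.mem_map, List.mem_cons, Finset.mem_insert]
    constructor
    · rintro ⟨b, (rfl | rfl | rfl | rfl | hb), rfl⟩
      · exact Or.inr (Or.inl rfl)
      · exact Or.inl rfl
      · exact Or.inr (Or.inl hx.symm)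
      · exact Or.inr (Or.inr ⟨b, by tauto, rfl⟩)
      · exact Or.inr (Or.inr ⟨b, by tauto, rfl⟩)
    · rintro (rfl | rfl | ⟨b, (rfl | hb), rfl⟩)
      · exact ⟨e₁, by tauto, rfl⟩
      · exact ⟨e₀, by tauto, rfl⟩
      · exact ⟨b, by tauto, rfl⟩
      · exact ⟨b, by tauto, rfl⟩
  rw [hset, Finset.card_insert_of_notMem hni]

lemma op2_unionAll (e₀ e₁ r₀ r₁ : α × Finset β) (rest : List (α × Finset β))
    (heq : e₀.2 = e₁.2) (J : Finset β) (hJ : J ⊆ e₀.2) :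
    (unionAll (e₀ :: e₁ :: r₀ :: r₁ :: rest)).card
      ≤ (unionAll ((((e₀.1, r₀.2) :: r₁ :: rest)).map
          (fun e => (e.1, e.2 \ J)))).card + e₀.2.card := by
  have hsub : unionAll (e₀ :: e₁ :: r₀ :: r₁ :: rest)
      ⊆ (unionAll ((((e₀.1, r₀.2) :: r₁ :: rest)).map
          (fun e => (e.1, e.2 \ J)))) ∪ e₀.2 := by
    intro j hjmem
    rw [mem_unionAll] at hjmem
    obtain ⟨e, he, hje⟩ := hjmem
    rw [Finset.mem_union]
    by_cases hjJ : j ∈ e₀.2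
    · exact Or.inr hjJ
    · left
      rw [mem_unionAll]
      have hjJ' : j ∉ J := fun h => hjJ (hJ h)
      simp only [List.mem_cons] at he
      rcases he with rfl | rfl | rfl | rfl | he
      · exact absurd hje hjJ
      · rw [← heq] at hje; exact absurd hje hjJ
      · exact ⟨(e₀.1, e.2 \ J), by simp, by simp [hje, hjJ']⟩
      · exact ⟨(e.1, e.2 \ J), by simp, by simp [hje, hjJ']⟩
      · refine ⟨(e.1, e.2 \ J), ?_, by simp [hje, hjJ']⟩
        simp only [List.mem_map, List.mem_cons]
        exact ⟨e, by tauto, rfl⟩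
  calc (unionAll (e₀ :: e₁ :: r₀ :: r₁ :: rest)).card
      ≤ ((unionAll ((((e₀.1, r₀.2) :: r₁ :: rest)).map
          (fun e => (e.1, e.2 \ J)))) ∪ e₀.2).card := Finset.card_le_card hsub
    _ ≤ _ := Finset.card_union_le _ _

lemma op2_sdm (g : ℕ) (e₀ e₁ r₀ r₁ : α × Finset β) (rest : List (α × Finset β))
    (heq : e₀.2 = e₁.2) (J : Finset β) :
    sdm g ((((e₀.1, r₀.2) :: r₁ :: rest)).map (fun e => (e.1, e.2 \ J)))
        + 2 * max e₀.2.card g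
      ≤ sdm g (e₀ :: e₁ :: r₀ :: r₁ :: rest) := by
  have hmono : ∀ (B : Finset β), max (B \ J).card g ≤ max B.card g := by
    intro B
    exact max_le_max (Finset.card_le_card (Finset.sdiff_subset)) le_rfl
  have hsum : sdm g ((((e₀.1, r₀.2) :: r₁ :: rest)).map (fun e => (e.1, e.2 \ J)))
      ≤ sdm g ((e₀.1, r₀.2) :: r₁ :: rest) := by
    unfold sdm
    rw [List.map_map]
    apply List.sum_le_sum
    intro e _
    exact hmono e.2
  have hexp : sdm g ((e₀.1, r₀.2) :: r₁ :: rest) + 2 * max e₀.2.card g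
      = sdm g (e₀ :: e₁ :: r₀ :: r₁ :: rest) := by
    simp only [sdm, List.map_cons, List.sum_cons, ← heq]
    ring
  omega

end Op2Q

section MainList
variable {α β : Type*} [DecidableEq α] [DecidableEq β]

lemma arith1 (g L A B S1 S R D : ℕ) (hL : 3 ≤ L)
    (hIH : 2*g*A + 2*B ≤ S1 + g*(L-1+2))
    (hR : R = A + 1) (hS : S = S1 + max D g) :
    2*g*R + 2*B ≤ S + g*(L+2) := by
  have h1 : 2*g*R = 2*g*A + 2*g := by rw [hR]; ring
  have h2 : g*(L-1+2) + g = g*(L+2) := by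
    rw [← Nat.mul_succ]; congr 1; omega
  linarith [le_max_right D g]

lemma arith2 (g L A B C S2 S R X : ℕ) (hL : 4 ≤ L)
    (hIH : 2*g*A + 2*B ≤ S2 + g*(L-2+2))
    (hR : R = A + 1) (hC : C ≤ B + X) (hS : S2 + 2*max X g ≤ S) :
    2*g*R + 2*C ≤ S + g*(L+2) := by
  have h1 : 2*g*R = 2*g*A + 2*g := by rw [hR]; ring
  have h2 : (L-2+2) = L := by omega
  rw [h2] at hIH
  have h3 : g*(L+2) = g*L + 2*g := by ring
  linarith [le_max_left X g, le_max_right X g]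

theorem listMain (g : ℕ) : ∀ (L : ℕ) (l : List (α × Finset β)), l.length = L → 2 ≤ L →
    valid l →
    2 * g * ((l.map Prod.fst).toFinset.card) + 2 * (unionAll l).card
      ≤ sdm g l + g * (L + 2) := by
  intro L
  induction L using Nat.strong_induction_on with
  | _ L IH =>
  intro l hlen h2 hval
  by_cases hU : ∃ e ∈ l, (l.map Prod.fst).count e.1 = 1
  · -- there is a vertex with a unique label
    obtain ⟨e, he, hcnt1⟩ := hU
    obtain ⟨s, hs, hget⟩ := List.mem_iff_getElem.mp he
    set k := (s + (L - 1)) % L with hk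
    suffices hgoal : 2 * g * (((l.rotate k).map Prod.fst).toFinset.card)
        + 2 * (unionAll (l.rotate k)).card ≤ sdm g (l.rotate k) + g * (L + 2) by
      rwa [rr_rotate, unionAll_rotate, sdm_rotate] at hgoal
    have hval' : valid (l.rotate k) := valid_rotate hval k
    have hlen' : (l.rotate k).length = L := by rw [List.length_rotate]; exact hlen
    have hcnt1' : ((l.rotate k).map Prod.fst).count e.1 = 1 := by
      rw [count_fst_rotate]; exact hcnt1
    have hsL : s < L := by omega
    have hmod : (1 + k) % L = s := by
      have h1L : 1 % L = 1 := Nat.mod_eq_of_lt (by omega)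
      have hstep : (1 + (s + (L-1)) % L) % L = (1 + (s + (L-1))) % L := by
        conv_lhs => rw [Nat.add_mod]
        conv_rhs => rw [Nat.add_mod]
        rw [Nat.mod_mod_of_dvd _ dvd_rfl]
      calc (1 + k) % L = (1 + (s + (L-1)) % L) % L := by rw [hk]
        _ = (1 + (s + (L-1))) % L := hstep
        _ = (s + L) % L := by congr 1; omega
        _ = s % L := Nat.add_mod_right s L
        _ = s := Nat.mod_eq_of_lt hsL
    have hget1 : (l.rotate k)[1]? = some e := by
      rw [List.getElem?_rotate (by omega : 1 < l.length)]
      have hx : (1 + k) % l.length = s := by rw [hlen]; exact hmod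
      rw [hx, List.getElem?_eq_getElem hs, hget]
    rcases hrot : l.rotate k with _ | ⟨e₀, _ | ⟨e₁, rest⟩⟩
    · rw [hrot] at hlen'; simp at hlen'; omega
    · rw [hrot] at hlen'; simp at hlen'; omega
    rw [hrot] at hval' hlen' hcnt1' hget1
    simp only [List.getElem?_cons_succ, List.getElem?_cons_zero, Option.some_inj] at hget1
    subst hget1
    rcases rest with _ | ⟨r₀, rest'⟩
    · -- base case L = 2
      have hL2 : L = 2 := by simpa using hlen'.symm
      have heq : e₀.2 = e₁.2 := tuple_eq_of_unique e₀ e₁ [] hval' hcnt1'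
      have hrr2 : (([e₀, e₁].map Prod.fst).toFinset).card ≤ 2 := by
        calc (([e₀, e₁].map Prod.fst).toFinset).card
            ≤ ([e₀, e₁].map Prod.fst).length := List.toFinset_card_le _
          _ = 2 := by simp
      have hcc2 : unionAll [e₀, e₁] = e₀.2 := by
        ext j
        rw [mem_unionAll]
        constructor
        · rintro ⟨a, ha, hja⟩
          rcases List.mem_cons.mp ha with rfl | ha'
          · exact hja
          · rcases List.mem_cons.mp ha' with rfl | ha''
            · rw [heq]; exact hja
            · simp at ha''
        · intro hj
          exact ⟨e₀, by simp, hj⟩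
      have hsdm2 : sdm g [e₀, e₁] = 2 * max e₀.2.card g := by
        simp only [sdm, List.map_cons, List.map_nil, List.sum_cons, List.sum_nil, ← heq]
        ring
      rw [hcc2, hsdm2, hL2]
      have h1 : 2*g*(([e₀,e₁].map Prod.fst).toFinset).card ≤ 2*g*2 :=
        Nat.mul_le_mul_left _ hrr2
      have h2 : e₀.2.card ≤ max e₀.2.card g := le_max_left _ _
      have h3 : g ≤ max e₀.2.card g := le_max_right _ _
      linarith
    · by_cases hne : e₀.1 = r₀.1
      · rcases rest' with _ | ⟨r₁, rest''⟩
        · -- L = 3 : flanks of the unique vertex are adjacent, contradiction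
          exfalso
          have hadj3 := hval'.1 (r₀, e₀) (by simp [ringL, ringAux])
          exact hadj3 hne.symm
        · -- OP2
          have heq : e₀.2 = e₁.2 :=
            tuple_eq_of_unique e₀ e₁ (r₀ :: r₁ :: rest'') hval' hcnt1'
          have hlenL : rest''.length + 4 = L := by simpa using hlen'
          have hL4 : 4 ≤ L := by omega
          have hvalm := op2_valid e₀ e₁ r₀ r₁ rest'' hval' hcnt1' hne
          have hlenm : ((((e₀.1, r₀.2) :: r₁ :: rest'')).map
              (fun e => (e.1, e.2 \ (e₀.2.filter (fun j =>
                cnt e₀.1 j (e₀ :: e₁ :: r₀ :: r₁ :: rest'') = 3))))).length = L - 2 := by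
            simp; omega
          have IHm := IH (L-2) (by omega) _ hlenm (by omega) hvalm
          have hrr := op2_rr e₀ e₁ r₀ r₁ rest'' hcnt1' hne
            (e₀.2.filter (fun j => cnt e₀.1 j (e₀ :: e₁ :: r₀ :: r₁ :: rest'') = 3))
          have hcc := op2_unionAll e₀ e₁ r₀ r₁ rest'' heq
            (e₀.2.filter (fun j => cnt e₀.1 j (e₀ :: e₁ :: r₀ :: r₁ :: rest'') = 3))
            (Finset.filter_subset _ _)
          have hsdm := op2_sdm g e₀ e₁ r₀ r₁ rest'' heq
            (e₀.2.filter (fun j => cnt e₀.1 j (e₀ :: e₁ :: r₀ :: r₁ :: rest'') = 3))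
          exact arith2 g L _ _ _ _ _ _ _ hL4 IHm hrr hcc hsdm
      · -- OP1
        have heq : e₀.2 = e₁.2 := tuple_eq_of_unique e₀ e₁ (r₀ :: rest') hval' hcnt1'
        have hlenL : rest'.length + 3 = L := by simpa using hlen'
        have hL3 : 3 ≤ L := by omega
        have hvalm := op1_valid e₀ e₁ r₀ rest' hval' hcnt1' hne
        have hlenm : (e₀ :: r₀ :: rest').length = L - 1 := by simp; omega
        have IHm := IH (L-1) (by omega) _ hlenm (by omega) hvalm
        have hrr := op1_rr e₀ e₁ r₀ rest' hcnt1'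
        have hccq := op1_unionAll e₀ e₁ r₀ rest' heq
        have hsdm := op1_sdm g e₀ e₁ r₀ rest'
        rw [hccq]
        exact arith1 g L _ _ _ _ _ _ hL3 IHm hrr hsdm
  · -- no unique labels
    have hall : ∀ a ∈ (l.map Prod.fst), 2 ≤ (l.map Prod.fst).count a := by
      intro a ha
      obtain ⟨e, he, rfl⟩ := List.mem_map.mp ha
      have h1 : 0 < (l.map Prod.fst).count e.1 := List.count_pos_iff.mpr ha
      have hne : (l.map Prod.fst).count e.1 ≠ 1 := fun h => hU ⟨e, he, h⟩
      omega
    have hA : 2 * (l.map Prod.fst).toFinset.card ≤ L := by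
      have := two_mul_card_le_length hall
      rwa [List.length_map, hlen] at this
    have hB : 2 * (unionAll l).card ≤ sdm g l := by
      have h1 : ∑ _j ∈ unionAll l, 2 ≤ ∑ j ∈ unionAll l, occ j l :=
        Finset.sum_le_sum (fun j hj => two_le_occ hval (by omega) hj)
      rw [sum_occ] at h1
      rw [Finset.sum_const, smul_eq_mul, mul_comm] at h1
      have hsd : (l.map fun e => e.2.card).sum ≤ sdm g l := by
        unfold sdm
        exact List.sum_le_sum (fun e _ => le_max_left _ _)
      omega
    calc 2 * g * ((l.map Prod.fst).toFinset.card) + 2 * (unionAll l).card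
        = g * (2 * ((l.map Prod.fst).toFinset.card)) + 2 * (unionAll l).card := by ring
      _ ≤ g * L + sdm g l := add_le_add (Nat.mul_le_mul_left g hA) hB
      _ ≤ sdm g l + g * (L + 2) := by
          have : g * L ≤ g * (L + 2) := Nat.mul_le_mul_left g (by omega)
          linarith

end MainList

section Bridge
variable {α β : Type*} [DecidableEq α] [DecidableEq β]

lemma ringAux_eq_zip (f : α × Finset β) :
    ∀ (x : α × Finset β) (xs : List (α × Finset β)),
      ringAux f (x :: xs) = (x :: xs).zip (xs ++ [f])
  | x, [] => by simp [ringAux]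
  | x, y :: t => by
      rw [ringAux_cons₂, ringAux_eq_zip f y t, List.cons_append, List.zip_cons_cons]

lemma ringL_eq_zip (l : List (α × Finset β)) : ringL l = l.zip (l.rotate 1) := by
  match l with
  | [] => rfl
  | a :: t =>
      have hrot : (a :: t).rotate 1 = t ++ [a] := by
        rw [show (1:ℕ) = 0 + 1 from rfl, List.rotate_cons_succ, List.rotate_zero]
      rw [hrot]
      exact ringAux_eq_zip a a t

end Bridge

section FinBridge

lemma finRange_rotate_one (L : ℕ) [NeZero L] (hL : 2 ≤ L) :
    (List.finRange L).rotate 1 = (List.finRange L).map (· + 1) := by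
  apply List.ext_getElem
  · simp
  · intro i h1 h2
    simp only [List.length_rotate, List.length_finRange] at h1
    rw [List.getElem_rotate, List.getElem_map, List.getElem_finRange, List.getElem_finRange]
    ext
    simp only [Fin.coe_cast, List.length_finRange, Fin.add_def, Fin.val_one']
    have : (1 : ℕ) % L = 1 := Nat.mod_eq_of_lt (by omega)
    rw [this]

end FinBridge

end ExcessAux

/-- The number of edges of the `L`-cycle whose `n`-endpoint is labelled `i` and whose
`p`-endpoint's tuple contains `j`. -/
def incCount (L n p : ℕ) [NeZero L] (nlabel : Fin L → Fin n)
    (ptuple : Fin L → Finset (Fin p)) (i : Fin n) (j : Fin p) : ℕ :=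
  (Finset.univ.filter fun s : Fin L => j ∈ ptuple s ∧ nlabel s = i).card +
  (Finset.univ.filter fun s : Fin L => j ∈ ptuple s ∧ nlabel (s + 1) = i).card

/-- Nonnegativity of the excess
`Δ = 1 + L/2 + (∑ d_s)/(2ℓ) − r − c/ℓ` of a `(p,n,L₁)`-multi-labelling of an `L`-graph. -/
theorem excess_nonneg (L n p ℓ L₁ : ℕ) [NeZero L] (hL : 2 ≤ L) (hℓ : 1 ≤ ℓ)
    (nlabel : Fin L → Fin n) (ptuple : Fin L → Finset (Fin p))
    (hsize : ∀ s : Fin L, ℓ ≤ (ptuple s).card ∧ (ptuple s).card ≤ L₁)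
    (hadj : ∀ s : Fin L, nlabel s ≠ nlabel (s + 1))
    (hpair : ∀ (i : Fin n) (j : Fin p),
      incCount L n p nlabel ptuple i j = 0 ∨ 2 ≤ incCount L n p nlabel ptuple i j) :
    0 ≤ 1 + (L : ℝ) / 2 + (∑ s : Fin L, ((ptuple s).card : ℝ)) / (2 * ℓ)
        - ((Finset.univ.image nlabel).card : ℝ)
        - ((Finset.univ.biUnion ptuple).card : ℝ) / ℓ := by
  classical
  set F : Fin L → (Fin n × Finset (Fin p)) := fun s => (nlabel s, ptuple s) with hF
  set l₀ : List (Fin n × Finset (Fin p)) := (List.finRange L).map F with hl₀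
  have hring : ExcessAux.ringL l₀ = (List.finRange L).map (fun s => (F s, F (s+1))) := by
    rw [ExcessAux.ringL_eq_zip, hl₀, ← List.map_rotate, ExcessAux.finRange_rotate_one L hL,
      List.map_map, List.zip_map']
    rfl
  have hcnt : ∀ i j, ExcessAux.cnt i j l₀ = incCount L n p nlabel ptuple i j := by
    intro i j
    unfold ExcessAux.cnt
    rw [hring, List.map_map]
    have h1 : ((List.finRange L).map (ExcessAux.wt i j ∘ fun s => (F s, F (s+1)))).sum
        = ∑ s : Fin L, ExcessAux.wt i j (F s, F (s+1)) := (Fin.sum_univ_def _).symm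
    rw [h1]
    unfold incCount
    rw [Finset.card_filter, Finset.card_filter, ← Finset.sum_add_distrib]
    apply Finset.sum_congr rfl
    intro s _
    simp only [ExcessAux.wt, hF]
    by_cases h1 : j ∈ ptuple s <;> by_cases h2 : nlabel s = i <;>
      by_cases h3 : nlabel (s+1) = i <;> simp [h1, h2, h3]
  have hvalid : ExcessAux.valid l₀ := by
    constructor
    · intro q hq
      rw [hring] at hq
      simp only [List.mem_map] at hq
      obtain ⟨s, _, rfl⟩ := hq
      exact hadj s
    · intro i j
      rw [hcnt i j]
      rcases hpair i j with h | h <;> omega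
  have hlen : l₀.length = L := by simp [hl₀]
  have hmain := ExcessAux.listMain ℓ L l₀ hlen hL hvalid
  have hrr : (l₀.map Prod.fst).toFinset = Finset.univ.image nlabel := by
    ext a
    simp [hl₀, hF]
  have hcc : ExcessAux.unionAll l₀ = Finset.univ.biUnion ptuple := by
    ext j
    rw [ExcessAux.mem_unionAll]
    simp [hl₀, hF, Finset.mem_biUnion]
  have hsdm : ExcessAux.sdm ℓ l₀ = ∑ s : Fin L, (ptuple s).card := by
    unfold ExcessAux.sdm
    rw [hl₀, List.map_map]
    have h1 : ((List.finRange L).map ((fun e : Fin n × Finset (Fin p) => max e.2.card ℓ) ∘ F)).sum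
        = ∑ s : Fin L, max (ptuple s).card ℓ := (Fin.sum_univ_def _).symm
    rw [h1]
    apply Finset.sum_congr rfl
    intro s _
    exact max_eq_left (hsize s).1
  rw [hrr, hcc, hsdm] at hmain
  have hR : ((2*ℓ*((Finset.univ.image nlabel).card) + 2*((Finset.univ.biUnion ptuple).card) : ℕ) : ℝ)
      ≤ (((∑ s : Fin L, (ptuple s).card) + ℓ*(L+2) : ℕ) : ℝ) := by
    exact_mod_cast hmain
  push_cast at hR
  have hl1 : (1:ℝ) ≤ (ℓ:ℝ) := by exact_mod_cast hℓ
  have hl0 : (0:ℝ) < (ℓ:ℝ) := by linarith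
  have key : 1 + (L:ℝ)/2 + (∑ s : Fin L, ((ptuple s).card : ℝ))/(2*(ℓ:ℝ))
        - ((Finset.univ.image nlabel).card : ℝ)
        - ((Finset.univ.biUnion ptuple).card : ℝ)/(ℓ:ℝ)
      = ((∑ s : Fin L, ((ptuple s).card : ℝ)) + (ℓ:ℝ)*((L:ℝ)+2)
          - 2*(ℓ:ℝ)*((Finset.univ.image nlabel).card : ℝ)
          - 2*((Finset.univ.biUnion ptuple).card : ℝ)) / (2*(ℓ:ℝ)) := by
    field_simp
    ring
  rw [key]
  apply div_nonneg
  · linarith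
  · linarith
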